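/- On any open subset of ℝ^m containing the nonnegative orthant on which every Υ_j(λ) (j = d,…,N) is invertible, the maps λ ↦ Z_k(λ) and λ ↦ X_k(λ) are differentiable in each variable λ_i (i = 1,…,m) for every k = d,…,N+1, and the partial derivatives satisfy the backward recursion: ∇_{λ_i} Z_{N+1} = ∇_{λ_i} X_{N+1} = F_i, and for k = N,…,d: ∇_{λ_i} M_k = Bᵀ ∇_{λ_i} Z_{k+1} A + σ² B̄ᵀ ∇_{λ_i} X_{k+1} Ā, ∇_{λ_i} Υ_k = Bᵀ ∇_{λ_i} Z_{k+1} B + σ² B̄ᵀ ∇_{λ_i} X_{k+1} B̄ + R_i, ∇_{λ_i} L_k = (∇_{λ_i} M_k)ᵀ Υ_k⁻¹ M_k − M_kᵀ Υ_k⁻¹ (∇_{λ_i} Υ_k) Υ_k⁻¹ M_k + M_kᵀ Υ_k⁻¹ ∇_{λ_i} M_k (with ∇_{λ_i} L_j = 0 for j > N), ∇_{λ_i} Z_k = Aᵀ ∇_{λ_i} Z_{k+1} A + σ² Āᵀ ∇_{λ_i} X_{k+1} Ā + Q_i − ∇_{λ_i} L_k, and ∇_{λ_i} X_k = ∇_{λ_i}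 Z_k + Σ_{j=0}^{d−1} (Aᵀ)^j ∇_{λ_i} L_{k+j} A^j. -/

import Mathlib

open Matrix

noncomputable section

/-- `Υ_k = Bᵀ Z_{k+1} B + σ² B̄ᵀ X_{k+1} B̄ + R(λ)`. -/
def Upsf {n mu : ℕ} (σ : ℝ) (B Bbar : Matrix (Fin n) (Fin mu) ℝ)
    (Rlam : Matrix (Fin mu) (Fin mu) ℝ) (Z X : ℕ → Matrix (Fin n) (Fin n) ℝ) (k : ℕ) :
    Matrix (Fin mu) (Fin mu) ℝ :=
  Bᵀ * Z (k + 1) * B + σ ^ 2 • (Bbarᵀ * X (k + 1) * Bbar) + Rlam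

/-- `M_k = Bᵀ Z_{k+1} A + σ² B̄ᵀ X_{k+1} Ā`. -/
def Mf {n mu : ℕ} (σ : ℝ) (A Abar : Matrix (Fin n) (Fin n) ℝ)
    (B Bbar : Matrix (Fin n) (Fin mu) ℝ) (Z X : ℕ → Matrix (Fin n) (Fin n) ℝ) (k : ℕ) :
    Matrix (Fin mu) (Fin n) ℝ :=
  Bᵀ * Z (k + 1) * A + σ ^ 2 • (Bbarᵀ * X (k + 1) * Abar)

/-- `L_k = M_kᵀ Υ_k⁻¹ M_k` for `k ≤ N`, and `L_k = 0` for `k > N`. -/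
def Lf {n mu : ℕ} (N : ℕ) (σ : ℝ) (A Abar : Matrix (Fin n) (Fin n) ℝ)
    (B Bbar : Matrix (Fin n) (Fin mu) ℝ) (Rlam : Matrix (Fin mu) (Fin mu) ℝ)
    (Z X : ℕ → Matrix (Fin n) (Fin n) ℝ) (k : ℕ) : Matrix (Fin n) (Fin n) ℝ :=
  if k ≤ N then
    (Mf σ A Abar B Bbar Z X k)ᵀ * (Upsf σ B Bbar Rlam Z X k)⁻¹ * Mf σ A Abar B Bbar Z X k
  else 0

/-- The Riccati-ZXL backward recursion with horizon `N`, delay `d`, terminal value `Flam`. -/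
def RiccatiZXL {n mu : ℕ} (d N : ℕ) (σ : ℝ) (A Abar : Matrix (Fin n) (Fin n) ℝ)
    (B Bbar : Matrix (Fin n) (Fin mu) ℝ) (Qlam : Matrix (Fin n) (Fin n) ℝ)
    (Rlam : Matrix (Fin mu) (Fin mu) ℝ) (Flam : Matrix (Fin n) (Fin n) ℝ)
    (Z X : ℕ → Matrix (Fin n) (Fin n) ℝ) : Prop :=
  Z (N + 1) = Flam ∧ X (N + 1) = Flam ∧
    ∀ k, d ≤ k → k ≤ N →
      Z k = Aᵀ * Z (k + 1) * A + σ ^ 2 • (Abarᵀ * X (k + 1) * Abar) + Qlam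
              - Lf N σ A Abar B Bbar Rlam Z X k ∧
      X k = Z k + ∑ i ∈ Finset.range d, (Aᵀ) ^ i * Lf N σ A Abar B Bbar Rlam Z X (k + i) * A ^ i

/-- `Q(λ) = Q 0 + ∑ i, λ i • Q (i+1)` (and likewise for `R`, `F`). -/
def lamMix {m p q : ℕ} (M : Fin (m + 1) → Matrix (Fin p) (Fin q) ℝ) (lam : Fin m → ℝ) :
    Matrix (Fin p) (Fin q) ℝ :=
  M 0 + ∑ i : Fin m, lam i • M i.succ

/-- `∇_{λ_i} M_k = Bᵀ ∇Z_{k+1} A + σ² B̄ᵀ ∇X_{k+1} Ā`. -/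
def DMf {n mu : ℕ} (σ : ℝ) (A Abar : Matrix (Fin n) (Fin n) ℝ)
    (B Bbar : Matrix (Fin n) (Fin mu) ℝ) (DZ DX : ℕ → Matrix (Fin n) (Fin n) ℝ) (k : ℕ) :
    Matrix (Fin mu) (Fin n) ℝ :=
  Bᵀ * DZ (k + 1) * A + σ ^ 2 • (Bbarᵀ * DX (k + 1) * Abar)

/-- `∇_{λ_i} Υ_k = Bᵀ ∇Z_{k+1} B + σ² B̄ᵀ ∇X_{k+1} B̄ + R_i`. -/
def DUpsf {n mu : ℕ} (σ : ℝ) (B Bbar : Matrix (Fin n) (Fin mu) ℝ)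
    (Ri : Matrix (Fin mu) (Fin mu) ℝ) (DZ DX : ℕ → Matrix (Fin n) (Fin n) ℝ) (k : ℕ) :
    Matrix (Fin mu) (Fin mu) ℝ :=
  Bᵀ * DZ (k + 1) * B + σ ^ 2 • (Bbarᵀ * DX (k + 1) * Bbar) + Ri

/-- `∇_{λ_i} L_k = (∇M_k)ᵀ Υ_k⁻¹ M_k − M_kᵀ Υ_k⁻¹ (∇Υ_k) Υ_k⁻¹ M_k + M_kᵀ Υ_k⁻¹ ∇M_k`
for `k ≤ N`, and `0` for `k > N`. -/
def DLf {n mu : ℕ} (N : ℕ) (σ : ℝ) (A Abar : Matrix (Fin n) (Fin n) ℝ)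
    (B Bbar : Matrix (Fin n) (Fin mu) ℝ) (Rlam Ri : Matrix (Fin mu) (Fin mu) ℝ)
    (Z X DZ DX : ℕ → Matrix (Fin n) (Fin n) ℝ) (k : ℕ) : Matrix (Fin n) (Fin n) ℝ :=
  if k ≤ N then
    (DMf σ A Abar B Bbar DZ DX k)ᵀ * (Upsf σ B Bbar Rlam Z X k)⁻¹ * Mf σ A Abar B Bbar Z X k
      - (Mf σ A Abar B Bbar Z X k)ᵀ * (Upsf σ B Bbar Rlam Z X k)⁻¹
          * DUpsf σ B Bbar Ri DZ DX k * (Upsf σ B Bbar Rlam Z X k)⁻¹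
          * Mf σ A Abar B Bbar Z X k
      + (Mf σ A Abar B Bbar Z X k)ᵀ * (Upsf σ B Bbar Rlam Z X k)⁻¹
          * DMf σ A Abar B Bbar DZ DX k
  else 0

namespace Stmt8Aux

/-- Entrywise `HasDerivAt` for matrix-valued functions of a real variable. -/
def HD {p q : ℕ} (f : ℝ → Matrix (Fin p) (Fin q) ℝ)
    (f' : Matrix (Fin p) (Fin q) ℝ) (x : ℝ) : Prop :=
  ∀ a b, HasDerivAt (fun t => f t a b) (f' a b) x

namespace HD

variable {p q r : ℕ} {x : ℝ}

lemma const (c : Matrix (Fin p) (Fin q) ℝ) : HD (fun _ => c) 0 x :=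
  fun _ _ => hasDerivAt_const _ _

lemma add {f g : ℝ → Matrix (Fin p) (Fin q) ℝ} {f' g'}
    (hf : HD f f' x) (hg : HD g g' x) :
    HD (fun t => f t + g t) (f' + g') x := fun a b => by
  simpa [Matrix.add_apply] using (hf a b).fun_add (hg a b)

lemma sub {f g : ℝ → Matrix (Fin p) (Fin q) ℝ} {f' g'}
    (hf : HD f f' x) (hg : HD g g' x) :
    HD (fun t => f t - g t) (f' - g') x := fun a b => by
  simpa [Matrix.sub_apply] using (hf a b).fun_sub (hg a b)

lemma smul (c : ℝ) {f : ℝ → Matrix (Fin p) (Fin q) ℝ} {f'}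
    (hf : HD f f' x) : HD (fun t => c • f t) (c • f') x := fun a b => by
  simpa [Matrix.smul_apply, smul_eq_mul] using (hf a b).const_mul c

lemma mul {f : ℝ → Matrix (Fin p) (Fin q) ℝ} {g : ℝ → Matrix (Fin q) (Fin r) ℝ}
    {f' g'} (hf : HD f f' x) (hg : HD g g' x) :
    HD (fun t => f t * g t) (f' * g x + f x * g') x := fun a b => by
  have : ∀ t, (f t * g t) a b = ∑ c : Fin q, f t a c * g t c b := fun t => Matrix.mul_apply
  simp only [this]
  have h : HasDerivAt (fun t => ∑ c : Fin q, f t a c * g t c b)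
      (∑ c : Fin q, (f' a c * g x c b + f x a c * g' c b)) x :=
    HasDerivAt.fun_sum fun c _ => (hf a c).fun_mul (hg c b)
  simpa [Matrix.add_apply, Matrix.mul_apply, Finset.sum_add_distrib] using h

lemma transpose {f : ℝ → Matrix (Fin p) (Fin q) ℝ} {f'} (hf : HD f f' x) :
    HD (fun t => (f t)ᵀ) f'ᵀ x := fun a b => hf b a

lemma constMul (C : Matrix (Fin p) (Fin q) ℝ) {g : ℝ → Matrix (Fin q) (Fin r) ℝ} {g'}
    (hg : HD g g' x) : HD (fun t => C * g t) (C * g') x := by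
  simpa using (const (x := x) C).mul hg

lemma mulConst {f : ℝ → Matrix (Fin p) (Fin q) ℝ} {f'} (hf : HD f f' x)
    (C : Matrix (Fin q) (Fin r) ℝ) : HD (fun t => f t * C) (f' * C) x := by
  simpa using hf.mul (const (x := x) C)

lemma sum {ι : Type*} {s : Finset ι} {f : ι → ℝ → Matrix (Fin p) (Fin q) ℝ}
    {f' : ι → Matrix (Fin p) (Fin q) ℝ}
    (h : ∀ j ∈ s, HD (f j) (f' j) x) :
    HD (fun t => ∑ j ∈ s, f j t) (∑ j ∈ s, f' j) x := fun a b => by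
  have : HasDerivAt (fun t => ∑ j ∈ s, f j t a b) (∑ j ∈ s, f' j a b) x :=
    HasDerivAt.fun_sum fun j hj => h j hj a b
  simpa [Matrix.sum_apply] using this

lemma congr {f g : ℝ → Matrix (Fin p) (Fin q) ℝ} {f'}
    (hf : HD f f' x) (h : ∀ᶠ t in nhds x, g t = f t) : HD g f' x := fun a b =>
  (hf a b).congr_of_eventuallyEq (h.mono fun t ht => by simp only [ht])

end HD

section Inv

variable {p : ℕ} {x : ℝ}

lemma differentiableAt_det {M : ℝ → Matrix (Fin p) (Fin p) ℝ}
    (h : ∀ a b, DifferentiableAt ℝ (fun t => M t a b) x) :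
    DifferentiableAt ℝ (fun t => (M t).det) x := by
  simp only [Matrix.det_apply']
  exact DifferentiableAt.fun_sum fun σ _ =>
    (differentiableAt_const _).fun_mul (DifferentiableAt.fun_finsetProd fun i _ => h _ _)

lemma differentiableAt_adjugate {M : ℝ → Matrix (Fin p) (Fin p) ℝ}
    (h : ∀ a b, DifferentiableAt ℝ (fun t => M t a b) x) (a b : Fin p) :
    DifferentiableAt ℝ (fun t => (M t).adjugate a b) x := by
  simp only [Matrix.adjugate_apply]
  refine differentiableAt_det fun a' b' => ?_
  simp only [Matrix.updateRow_apply]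
  by_cases h' : a' = b
  · simp [h']
  · simpa [h'] using h a' b'

lemma HD.inv {U : ℝ → Matrix (Fin p) (Fin p) ℝ} {U'}
    (h : HD U U' x) (hu : IsUnit (U x)) :
    HD (fun t => (U t)⁻¹) (-((U x)⁻¹ * U' * (U x)⁻¹)) x := by
  classical
  have hdet : IsUnit (U x).det := (Matrix.isUnit_iff_isUnit_det _).mp hu
  have hdet0 : (U x).det ≠ 0 := by
    simpa [isUnit_iff_ne_zero] using hdet
  have hdiff : ∀ a b, DifferentiableAt ℝ (fun t => U t a b) x :=
    fun a b => (h a b).differentiableAt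
  have hdetdiff : DifferentiableAt ℝ (fun t => (U t).det) x := differentiableAt_det hdiff
  have hVeq : ∀ t, (U t)⁻¹ = ((U t).det)⁻¹ • (U t).adjugate := by
    intro t
    rw [Matrix.inv_def, Ring.inverse_eq_inv']
  have hVdiff : ∀ a b, DifferentiableAt ℝ (fun t => (U t)⁻¹ a b) x := by
    intro a b
    have : (fun t => (U t)⁻¹ a b) = fun t => ((U t).det)⁻¹ * (U t).adjugate a b := by
      funext t; rw [hVeq t]; simp [Matrix.smul_apply, smul_eq_mul]
    rw [this]
    exact (hdetdiff.inv hdet0).mul (differentiableAt_adjugate hdiff a b)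
  set V' : Matrix (Fin p) (Fin p) ℝ :=
    Matrix.of fun a b => deriv (fun t => (U t)⁻¹ a b) x with hV'
  have hV : HD (fun t => (U t)⁻¹) V' x := fun a b => (hVdiff a b).hasDerivAt
  have hprod : HD (fun t => U t * (U t)⁻¹) (U' * (U x)⁻¹ + U x * V') x := h.mul hV
  have hev : ∀ᶠ t in nhds x, U t * (U t)⁻¹ = 1 := by
    have : ∀ᶠ t in nhds x, (U t).det ≠ 0 := hdetdiff.continuousAt.eventually_ne hdet0
    exact this.mono fun t ht => Matrix.mul_nonsing_inv _ (isUnit_iff_ne_zero.mpr ht)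
  have hone : HD (fun _ : ℝ => (1 : Matrix (Fin p) (Fin p) ℝ)) (U' * (U x)⁻¹ + U x * V') x :=
    hprod.congr (hev.mono fun t ht => ht.symm)
  have hzero : U' * (U x)⁻¹ + U x * V' = 0 := by
    ext a b
    have h1 := hone a b
    have h2 := HD.const (x := x) (1 : Matrix (Fin p) (Fin p) ℝ) a b
    have := h1.unique h2
    simpa using this
  have hVval : V' = -((U x)⁻¹ * U' * (U x)⁻¹) := by
    have h3 : U x * V' = -(U' * (U x)⁻¹) := by
      rw [eq_neg_iff_add_eq_zero, add_comm]; exact hzero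
    calc V' = 1 * V' := (one_mul V').symm
    _ = ((U x)⁻¹ * U x) * V' := by rw [Matrix.nonsing_inv_mul _ hdet]
    _ = (U x)⁻¹ * (U x * V') := by rw [Matrix.mul_assoc]
    _ = (U x)⁻¹ * -(U' * (U x)⁻¹) := by rw [h3]
    _ = -((U x)⁻¹ * U' * (U x)⁻¹) := by rw [Matrix.mul_neg, Matrix.mul_assoc]
  rw [← hVval]
  exact hV

end Inv

variable {n mu m : ℕ}

lemma HD_lamMix {p q : ℕ} (Mm : Fin (m + 1) → Matrix (Fin p) (Fin q) ℝ)
    (lam : Fin m → ℝ) (i : Fin m) (x : ℝ) :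
    HD (fun t => lamMix Mm (Function.update lam i t)) (Mm i.succ) x := by
  classical
  intro a b
  have hrw : ∀ t : ℝ, lamMix Mm (Function.update lam i t) a b
      = Mm 0 a b + ∑ j : Fin m, Function.update lam i t j * Mm j.succ a b := by
    intro t
    simp [lamMix, Matrix.add_apply, Matrix.sum_apply, Matrix.smul_apply, smul_eq_mul]
  simp only [hrw]
  have h : HasDerivAt (fun t : ℝ => ∑ j : Fin m, Function.update lam i t j * Mm j.succ a b)
      (∑ j : Fin m, if j = i then Mm j.succ a b else 0) x := by
    refine HasDerivAt.fun_sum fun j _ => ?_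
    by_cases hj : j = i
    · subst hj
      simp only [Function.update_self, if_pos rfl]
      simpa using (hasDerivAt_id x).mul_const (Mm j.succ a b)
    · simp only [Function.update_of_ne hj, if_neg hj]
      exact hasDerivAt_const x _
  have h2 := (hasDerivAt_const x (Mm 0 a b)).fun_add h
  simpa [Finset.sum_ite_eq'] using h2

lemma DLf_congr {N : ℕ} {σ : ℝ} {A Abar : Matrix (Fin n) (Fin n) ℝ}
    {B Bbar : Matrix (Fin n) (Fin mu) ℝ} {Rlam Ri : Matrix (Fin mu) (Fin mu) ℝ}
    {Z X DZ DX DZ' DX' : ℕ → Matrix (Fin n) (Fin n) ℝ} {k : ℕ}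
    (h1 : DZ (k + 1) = DZ' (k + 1)) (h2 : DX (k + 1) = DX' (k + 1)) :
    DLf N σ A Abar B Bbar Rlam Ri Z X DZ DX k
      = DLf N σ A Abar B Bbar Rlam Ri Z X DZ' DX' k := by
  simp only [DLf, DMf, DUpsf, h1, h2]

/-- Backward recursion defining the derivative matrices `(∇Z_k, ∇X_k)`. -/
def DP (d N : ℕ) (σ : ℝ) (A Abar : Matrix (Fin n) (Fin n) ℝ)
    (B Bbar : Matrix (Fin n) (Fin mu) ℝ) (Qi : Matrix (Fin n) (Fin n) ℝ)
    (Rlam Ri : Matrix (Fin mu) (Fin mu) ℝ) (Fi : Matrix (Fin n) (Fin n) ℝ)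
    (Z X : ℕ → Matrix (Fin n) (Fin n) ℝ) (k : ℕ) :
    Matrix (Fin n) (Fin n) ℝ × Matrix (Fin n) (Fin n) ℝ :=
  if h : N + 1 ≤ k then (Fi, Fi)
  else
    (Aᵀ * (DP d N σ A Abar B Bbar Qi Rlam Ri Fi Z X (k + 1)).1 * A
      + σ ^ 2 • (Abarᵀ * (DP d N σ A Abar B Bbar Qi Rlam Ri Fi Z X (k + 1)).2 * Abar) + Qi
      - DLf N σ A Abar B Bbar Rlam Ri Z X
          (fun j => (DP d N σ A Abar B Bbar Qi Rlam Ri Fi Z X (max j (k + 1))).1)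
          (fun j => (DP d N σ A Abar B Bbar Qi Rlam Ri Fi Z X (max j (k + 1))).2) k,
     Aᵀ * (DP d N σ A Abar B Bbar Qi Rlam Ri Fi Z X (k + 1)).1 * A
      + σ ^ 2 • (Abarᵀ * (DP d N σ A Abar B Bbar Qi Rlam Ri Fi Z X (k + 1)).2 * Abar) + Qi
      - DLf N σ A Abar B Bbar Rlam Ri Z X
          (fun j => (DP d N σ A Abar B Bbar Qi Rlam Ri Fi Z X (max j (k + 1))).1)
          (fun j => (DP d N σ A Abar B Bbar Qi Rlam Ri Fi Z X (max j (k + 1))).2) k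
      + ∑ j ∈ Finset.range d, (Aᵀ) ^ j
          * DLf N σ A Abar B Bbar Rlam Ri Z X
              (fun j' => (DP d N σ A Abar B Bbar Qi Rlam Ri Fi Z X (max j' (k + 1))).1)
              (fun j' => (DP d N σ A Abar B Bbar Qi Rlam Ri Fi Z X (max j' (k + 1))).2) (k + j)
          * A ^ j)
termination_by N + 1 - k
decreasing_by all_goals omega

variable {d N : ℕ} {σ : ℝ} {A Abar : Matrix (Fin n) (Fin n) ℝ}
    {B Bbar : Matrix (Fin n) (Fin mu) ℝ} {Qi : Matrix (Fin n) (Fin n) ℝ}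
    {Rlam Ri : Matrix (Fin mu) (Fin mu) ℝ} {Fi : Matrix (Fin n) (Fin n) ℝ}
    {Z X : ℕ → Matrix (Fin n) (Fin n) ℝ}

set_option maxHeartbeats 1000000 in
lemma DP_hi {k : ℕ} (h : N + 1 ≤ k) :
    DP d N σ A Abar B Bbar Qi Rlam Ri Fi Z X k = (Fi, Fi) := by
  rw [DP, dif_pos h]

set_option maxHeartbeats 1000000 in
lemma DP_fst {k : ℕ} (h : k ≤ N) :
    (DP d N σ A Abar B Bbar Qi Rlam Ri Fi Z X k).1
      = Aᵀ * (DP d N σ A Abar B Bbar Qi Rlam Ri Fi Z X (k + 1)).1 * A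
        + σ ^ 2 • (Abarᵀ * (DP d N σ A Abar B Bbar Qi Rlam Ri Fi Z X (k + 1)).2 * Abar) + Qi
        - DLf N σ A Abar B Bbar Rlam Ri Z X
            (fun j => (DP d N σ A Abar B Bbar Qi Rlam Ri Fi Z X j).1)
            (fun j => (DP d N σ A Abar B Bbar Qi Rlam Ri Fi Z X j).2) k := by
  conv_lhs => rw [DP, dif_neg (show ¬ (N + 1 ≤ k) from by omega)]
  dsimp only
  congr 1
  refine DLf_congr ?_ ?_ <;> simp

set_option maxHeartbeats 1000000 in
lemma DP_snd {k : ℕ} (h : k ≤ N) :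
    (DP d N σ A Abar B Bbar Qi Rlam Ri Fi Z X k).2
      = (DP d N σ A Abar B Bbar Qi Rlam Ri Fi Z X k).1
        + ∑ j ∈ Finset.range d, (Aᵀ) ^ j
            * DLf N σ A Abar B Bbar Rlam Ri Z X
                (fun j' => (DP d N σ A Abar B Bbar Qi Rlam Ri Fi Z X j').1)
                (fun j' => (DP d N σ A Abar B Bbar Qi Rlam Ri Fi Z X j').2) (k + j)
            * A ^ j := by
  rw [DP_fst h]
  conv_lhs => rw [DP, dif_neg (show ¬ (N + 1 ≤ k) from by omega)]
  dsimp only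
  congr 1
  · congr 1
    refine DLf_congr ?_ ?_ <;> simp
  · refine Finset.sum_congr rfl fun j hj => ?_
    congr 2
    refine DLf_congr ?_ ?_ <;>
      simp [Nat.max_eq_left (by omega : k + 1 ≤ k + j + 1)]

lemma HD_Mf {Zt Xt : ℝ → ℕ → Matrix (Fin n) (Fin n) ℝ}
    {DZf DXf : ℕ → Matrix (Fin n) (Fin n) ℝ} {k : ℕ} {x : ℝ}
    (hZ : HD (fun t => Zt t (k + 1)) (DZf (k + 1)) x)
    (hX : HD (fun t => Xt t (k + 1)) (DXf (k + 1)) x) :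
    HD (fun t => Mf σ A Abar B Bbar (Zt t) (Xt t) k) (DMf σ A Abar B Bbar DZf DXf k) x := by
  unfold Mf DMf
  exact ((hZ.constMul Bᵀ).mulConst A).add (HD.smul (σ ^ 2) ((hX.constMul Bbarᵀ).mulConst Abar))

lemma HD_Upsf {Zt Xt : ℝ → ℕ → Matrix (Fin n) (Fin n) ℝ}
    {Rt : ℝ → Matrix (Fin mu) (Fin mu) ℝ}
    {DZf DXf : ℕ → Matrix (Fin n) (Fin n) ℝ} {k : ℕ} {x : ℝ}
    (hZ : HD (fun t => Zt t (k + 1)) (DZf (k + 1)) x)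
    (hX : HD (fun t => Xt t (k + 1)) (DXf (k + 1)) x)
    (hR : HD Rt Ri x) :
    HD (fun t => Upsf σ B Bbar (Rt t) (Zt t) (Xt t) k) (DUpsf σ B Bbar Ri DZf DXf k) x := by
  unfold Upsf DUpsf
  exact (((hZ.constMul Bᵀ).mulConst B).add
    (HD.smul (σ ^ 2) ((hX.constMul Bbarᵀ).mulConst Bbar))).add hR

lemma HD_Lprod {Mt : ℝ → Matrix (Fin mu) (Fin n) ℝ} {Ut : ℝ → Matrix (Fin mu) (Fin mu) ℝ}
    {DM : Matrix (Fin mu) (Fin n) ℝ} {DU : Matrix (Fin mu) (Fin mu) ℝ} {x : ℝ}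
    (hM : HD Mt DM x) (hU : HD Ut DU x) (hunit : IsUnit (Ut x)) :
    HD (fun t => (Mt t)ᵀ * (Ut t)⁻¹ * Mt t)
      (DMᵀ * (Ut x)⁻¹ * Mt x
        - (Mt x)ᵀ * (Ut x)⁻¹ * DU * (Ut x)⁻¹ * Mt x
        + (Mt x)ᵀ * (Ut x)⁻¹ * DM) x := by
  have hinv := hU.inv hunit
  have h := (hM.transpose.mul hinv).mul hM
  convert h using 1
  simp only [Matrix.add_mul, Matrix.neg_mul, Matrix.mul_neg, sub_eq_add_neg, Matrix.mul_assoc]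

end Stmt8Aux

/-- On any open `O ⊆ ℝ^m` containing the nonnegative orthant on which every
`Υ_j(λ)` (`j = d,…,N`) is invertible, the maps `λ ↦ Z_k(λ)` and `λ ↦ X_k(λ)` are
differentiable in each variable `λ_i` for every `k = d,…,N+1`, and the partial derivatives
(together with those of `M_k`, `Υ_k`, `L_k`) satisfy the stated backward recursion. -/
theorem stmt8 {n mu m : ℕ} (hn : 0 < n) (hmu : 0 < mu) (d N : ℕ) (hd : 1 ≤ d) (hN : d ≤ N)
    (σ : ℝ) (hσ : 0 < σ)
    (A Abar : Matrix (Fin n) (Fin n) ℝ) (B Bbar : Matrix (Fin n) (Fin mu) ℝ)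
    (Q : Fin (m + 1) → Matrix (Fin n) (Fin n) ℝ)
    (R : Fin (m + 1) → Matrix (Fin mu) (Fin mu) ℝ)
    (F : Fin (m + 1) → Matrix (Fin n) (Fin n) ℝ)
    (hQ : ∀ i, (Q i).PosDef) (hR : ∀ i, (R i).PosDef) (hF : ∀ i, (F i).PosDef)
    (O : Set (Fin m → ℝ)) (hO : IsOpen O)
    (horth : {lam : Fin m → ℝ | ∀ i, 0 ≤ lam i} ⊆ O)
    (Z X : (Fin m → ℝ) → ℕ → Matrix (Fin n) (Fin n) ℝ)
    (hZX : ∀ lam ∈ O, RiccatiZXL d N σ A Abar B Bbar (lamMix Q lam) (lamMix R lam)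
        (lamMix F lam) (Z lam) (X lam))
    (hUps : ∀ lam ∈ O, ∀ k, d ≤ k → k ≤ N →
        IsUnit (Upsf σ B Bbar (lamMix R lam) (Z lam) (X lam) k)) :
    ∃ DZ DX : (Fin m → ℝ) → Fin m → ℕ → Matrix (Fin n) (Fin n) ℝ,
      ∀ lam ∈ O, ∀ i : Fin m,
        -- differentiability of Z_k and X_k in λ_i, with partial derivatives DZ, DX
        (∀ k, d ≤ k → k ≤ N + 1 → ∀ a b,
          HasDerivAt (fun t : ℝ => Z (Function.update lam i t) k a b)
            (DZ lam i k a b) (lam i) ∧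
          HasDerivAt (fun t : ℝ => X (Function.update lam i t) k a b)
            (DX lam i k a b) (lam i)) ∧
        -- terminal values ∇Z_{N+1} = ∇X_{N+1} = F_i
        DZ lam i (N + 1) = F i.succ ∧ DX lam i (N + 1) = F i.succ ∧
        -- the derivative recursion for k = N, …, d
        (∀ k, d ≤ k → k ≤ N →
          (∀ a b, HasDerivAt
              (fun t : ℝ => Mf σ A Abar B Bbar (Z (Function.update lam i t))
                (X (Function.update lam i t)) k a b)
              (DMf σ A Abar B Bbar (DZ lam i) (DX lam i) k a b) (lam i)) ∧
          (∀ a b, HasDerivAt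
              (fun t : ℝ => Upsf σ B Bbar (lamMix R (Function.update lam i t))
                (Z (Function.update lam i t)) (X (Function.update lam i t)) k a b)
              (DUpsf σ B Bbar (R i.succ) (DZ lam i) (DX lam i) k a b) (lam i)) ∧
          (∀ a b, HasDerivAt
              (fun t : ℝ => Lf N σ A Abar B Bbar (lamMix R (Function.update lam i t))
                (Z (Function.update lam i t)) (X (Function.update lam i t)) k a b)
              (DLf N σ A Abar B Bbar (lamMix R lam) (R i.succ)
                (Z lam) (X lam) (DZ lam i) (DX lam i) k a b) (lam i)) ∧
          DZ lam i k = Aᵀ * DZ lam i (k + 1) * A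
              + σ ^ 2 • (Abarᵀ * DX lam i (k + 1) * Abar) + Q i.succ
              - DLf N σ A Abar B Bbar (lamMix R lam) (R i.succ)
                  (Z lam) (X lam) (DZ lam i) (DX lam i) k ∧
          DX lam i k = DZ lam i k + ∑ j ∈ Finset.range d,
              (Aᵀ) ^ j * DLf N σ A Abar B Bbar (lamMix R lam) (R i.succ)
                (Z lam) (X lam) (DZ lam i) (DX lam i) (k + j) * A ^ j) := by
  classical
  set DZ0 : (Fin m → ℝ) → Fin m → ℕ → Matrix (Fin n) (Fin n) ℝ := fun lam i k =>
    (Stmt8Aux.DP d N σ A Abar B Bbar (Q i.succ) (lamMix R lam) (R i.succ) (F i.succ)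
      (Z lam) (X lam) k).1 with hDZ0
  set DX0 : (Fin m → ℝ) → Fin m → ℕ → Matrix (Fin n) (Fin n) ℝ := fun lam i k =>
    (Stmt8Aux.DP d N σ A Abar B Bbar (Q i.succ) (lamMix R lam) (R i.succ) (F i.succ)
      (Z lam) (X lam) k).2 with hDX0
  refine ⟨DZ0, DX0, ?_⟩
  intro lam hlam i
  set x := lam i with hx
  have hself : Function.update lam i x = lam := Function.update_eq_self i lam
  have hucont : Continuous (fun t : ℝ => Function.update lam i t) := by
    refine continuous_pi fun j => ?_
    rcases eq_or_ne j i with hj | hj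
    · subst hj
      simp only [Function.update_self]
      exact continuous_id
    · simp only [Function.update_of_ne hj]
      exact continuous_const
  have hmemO : ∀ᶠ t in nhds x, Function.update lam i t ∈ O := by
    have := hucont.continuousAt (x := x)
    exact this.preimage_mem_nhds (by rw [hself]; exact hO.mem_nhds hlam)
  have hRt : Stmt8Aux.HD (fun t => lamMix R (Function.update lam i t)) (R i.succ) x :=
    Stmt8Aux.HD_lamMix R lam i x
  have hQt : Stmt8Aux.HD (fun t => lamMix Q (Function.update lam i t)) (Q i.succ) x :=
    Stmt8Aux.HD_lamMix Q lam i x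
  -- derivative of L_{k'} given derivatives of Z, X at k' + 1
  have hLfHD : ∀ k', d ≤ k' →
      (k' ≤ N →
        Stmt8Aux.HD (fun t => Z (Function.update lam i t) (k' + 1)) (DZ0 lam i (k' + 1)) x ∧
        Stmt8Aux.HD (fun t => X (Function.update lam i t) (k' + 1)) (DX0 lam i (k' + 1)) x) →
      Stmt8Aux.HD
        (fun t => Lf N σ A Abar B Bbar (lamMix R (Function.update lam i t))
          (Z (Function.update lam i t)) (X (Function.update lam i t)) k')
        (DLf N σ A Abar B Bbar (lamMix R lam) (R i.succ) (Z lam) (X lam)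
          (DZ0 lam i) (DX0 lam i) k') x := by
    intro k' hdk' hZX1
    by_cases hk'N : k' ≤ N
    · obtain ⟨hZ1, hX1⟩ := hZX1 hk'N
      have hM := Stmt8Aux.HD_Mf (σ := σ) (A := A) (Abar := Abar) (B := B) (Bbar := Bbar)
        (DZf := DZ0 lam i) (DXf := DX0 lam i) hZ1 hX1
      have hU := Stmt8Aux.HD_Upsf (σ := σ) (B := B) (Bbar := Bbar) (Ri := R i.succ)
        (DZf := DZ0 lam i) (DXf := DX0 lam i) hZ1 hX1 hRt
      have hunit : IsUnit (Upsf σ B Bbar (lamMix R (Function.update lam i x))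
          (Z (Function.update lam i x)) (X (Function.update lam i x)) k') := by
        rw [hself]
        exact hUps lam hlam k' hdk' hk'N
      have hL := Stmt8Aux.HD_Lprod hM hU hunit
      simp only [hself] at hL
      simp only [Lf, DLf, if_pos hk'N]
      exact hL
    · simp only [Lf, DLf, if_neg hk'N]
      exact Stmt8Aux.HD.const 0
  -- main backward induction
  have key : ∀ J k, d ≤ k → k ≤ N + 1 → N + 1 - k ≤ J →
      Stmt8Aux.HD (fun t => Z (Function.update lam i t) k) (DZ0 lam i k) x ∧
      Stmt8Aux.HD (fun t => X (Function.update lam i t) k) (DX0 lam i k) x := by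
    have base :
        Stmt8Aux.HD (fun t => Z (Function.update lam i t) (N + 1)) (DZ0 lam i (N + 1)) x ∧
        Stmt8Aux.HD (fun t => X (Function.update lam i t) (N + 1)) (DX0 lam i (N + 1)) x := by
      have hDZval : DZ0 lam i (N + 1) = F i.succ := by
        simp only [hDZ0]
        rw [Stmt8Aux.DP_hi le_rfl]
      have hDXval : DX0 lam i (N + 1) = F i.succ := by
        simp only [hDX0]
        rw [Stmt8Aux.DP_hi le_rfl]
      constructor
      · rw [hDZval]
        exact (Stmt8Aux.HD_lamMix F lam i x).congr (hmemO.mono fun t ht => (hZX _ ht).1)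
      · rw [hDXval]
        exact (Stmt8Aux.HD_lamMix F lam i x).congr (hmemO.mono fun t ht => (hZX _ ht).2.1)
    intro J
    induction J with
    | zero =>
      intro k hdk hkN hJ
      have hk : k = N + 1 := by omega
      subst hk
      exact base
    | succ J ih =>
      intro k hdk hkN hJ
      by_cases hk : N + 1 ≤ k
      · have hk' : k = N + 1 := by omega
        subst hk'
        exact base
      · have hkN' : k ≤ N := by omega
        have hstep : ∀ k', k < k' → k' ≤ N + 1 →
            Stmt8Aux.HD (fun t => Z (Function.update lam i t) k') (DZ0 lam i k') x ∧
            Stmt8Aux.HD (fun t => X (Function.update lam i t) k') (DX0 lam i k') x :=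
          fun k' h1 h2 => ih k' (by omega) h2 (by omega)
        have hLf : ∀ k', k ≤ k' →
            Stmt8Aux.HD
              (fun t => Lf N σ A Abar B Bbar (lamMix R (Function.update lam i t))
                (Z (Function.update lam i t)) (X (Function.update lam i t)) k')
              (DLf N σ A Abar B Bbar (lamMix R lam) (R i.succ) (Z lam) (X lam)
                (DZ0 lam i) (DX0 lam i) k') x := by
          intro k' hkk'
          exact hLfHD k' (by omega) fun hk'N =>
            ⟨(hstep (k' + 1) (by omega) (by omega)).1, (hstep (k' + 1) (by omega) (by omega)).2⟩
        have hZ1 := (hstep (k + 1) (by omega) (by omega)).1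
        have hX1 := (hstep (k + 1) (by omega) (by omega)).2
        have hZk : Stmt8Aux.HD (fun t => Z (Function.update lam i t) k) (DZ0 lam i k) x := by
          have hrec := ((((hZ1.constMul Aᵀ).mulConst A).add
            (Stmt8Aux.HD.smul (σ ^ 2) ((hX1.constMul Abarᵀ).mulConst Abar))).add hQt).sub
            (hLf k le_rfl)
          have hDZeq : DZ0 lam i k
              = Aᵀ * DZ0 lam i (k + 1) * A + σ ^ 2 • (Abarᵀ * DX0 lam i (k + 1) * Abar)
                + Q i.succ
                - DLf N σ A Abar B Bbar (lamMix R lam) (R i.succ) (Z lam) (X lam)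
                    (DZ0 lam i) (DX0 lam i) k := Stmt8Aux.DP_fst hkN'
          rw [hDZeq]
          exact hrec.congr (hmemO.mono fun t ht => ((hZX _ ht).2.2 k hdk hkN').1)
        have hXk : Stmt8Aux.HD (fun t => X (Function.update lam i t) k) (DX0 lam i k) x := by
          have hsum := Stmt8Aux.HD.sum (s := Finset.range d)
            (f := fun j t => (Aᵀ) ^ j * Lf N σ A Abar B Bbar
              (lamMix R (Function.update lam i t)) (Z (Function.update lam i t))
              (X (Function.update lam i t)) (k + j) * A ^ j)
            (f' := fun j => (Aᵀ) ^ j * DLf N σ A Abar B Bbar (lamMix R lam) (R i.succ)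
              (Z lam) (X lam) (DZ0 lam i) (DX0 lam i) (k + j) * A ^ j)
            (fun j _ => ((hLf (k + j) (by omega)).constMul ((Aᵀ) ^ j)).mulConst (A ^ j))
          have hDXeq : DX0 lam i k
              = DZ0 lam i k + ∑ j ∈ Finset.range d, (Aᵀ) ^ j
                  * DLf N σ A Abar B Bbar (lamMix R lam) (R i.succ) (Z lam) (X lam)
                      (DZ0 lam i) (DX0 lam i) (k + j) * A ^ j := Stmt8Aux.DP_snd hkN'
          rw [hDXeq]
          exact (hZk.add hsum).congr (hmemO.mono fun t ht => ((hZX _ ht).2.2 k hdk hkN').2)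
        exact ⟨hZk, hXk⟩
  refine ⟨?_, ?_, ?_, ?_⟩
  · intro k h1 h2 a b
    obtain ⟨hZk, hXk⟩ := key (N + 1 - k) k h1 h2 le_rfl
    exact ⟨hZk a b, hXk a b⟩
  · simp only [hDZ0]
    rw [Stmt8Aux.DP_hi le_rfl]
  · simp only [hDX0]
    rw [Stmt8Aux.DP_hi le_rfl]
  · intro k hdk hkN
    have hZ1 := (key (N - k) (k + 1) (by omega) (by omega) (by omega)).1
    have hX1 := (key (N - k) (k + 1) (by omega) (by omega) (by omega)).2
    refine ⟨?_, ?_, ?_, ?_, ?_⟩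
    · exact fun a b => Stmt8Aux.HD_Mf (σ := σ) (A := A) (Abar := Abar) (B := B) (Bbar := Bbar)
        (DZf := DZ0 lam i) (DXf := DX0 lam i) hZ1 hX1 a b
    · exact fun a b => Stmt8Aux.HD_Upsf (σ := σ) (B := B) (Bbar := Bbar) (Ri := R i.succ)
        (DZf := DZ0 lam i) (DXf := DX0 lam i) hZ1 hX1 hRt a b
    · exact fun a b => hLfHD k hdk (fun _ => ⟨hZ1, hX1⟩) a b
    · exact Stmt8Aux.DP_fst hkN
    · exact Stmt8Aux.DP_snd hkN

end
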